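/- Let X, Q be finite-dimensional real inner product spaces, Ξ : X → Q linear with Q = range Ξ, and A a bounded bilinear form on X. Let (x*, q*) ∈ X × Q solve the mixed problem A(x*, y) + ⟨Ξ y, q*⟩ = F(y) for all y ∈ X and Ξ x* = 0. For λ > 0 define the iterated penalty iteration: given (u⁰) ∈ X, for n ≥ 0 let xⁿ ∈ X solve A(xⁿ, y) + λ⟨Ξ xⁿ, Ξ y⟩ = F(y) − ⟨Ξ uⁿ, Ξ y⟩ for all y ∈ X, and set uⁿ⁺¹ = uⁿ + λ xⁿ. Then for λ sufficiently large (λ > λ₀ with λ₀ depending only on the continuity constant of A, the inf-sup constant of A on ker Ξ, and the inf-sup constant of Ξ) the iterates are well-defined and converge geometrically: ‖xⁿ − x*‖ ≤ C r(λ)ⁿ ‖x⁰ − x*‖ with r(λ) = (8/9)·λ₀/(λ − λ₀) < 1 for λ > (17/8)λ₀. -/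

import Mathlib

open RealInnerProductSpace

private lemma stmt8_range_adjoint {X Q : Type*}
    [NormedAddCommGroup X] [InnerProductSpace ℝ X] [FiniteDimensional ℝ X]
    [NormedAddCommGroup Q] [InnerProductSpace ℝ Q] [FiniteDimensional ℝ Q]
    (Ξ : X →ₗ[ℝ] Q) (hsurj : LinearMap.range Ξ = ⊤) (β : ℝ) (hβ : 0 < β)
    (hadj : ∀ η : Q, β * ‖η‖ ≤ ‖LinearMap.adjoint Ξ η‖) :
    LinearMap.range (LinearMap.adjoint Ξ) = (LinearMap.ker Ξ)ᗮ := by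
  have hinj : Function.Injective (LinearMap.adjoint Ξ) := by
    rw [injective_iff_map_eq_zero]
    intro η h
    have := hadj η
    rw [h, norm_zero] at this
    have : ‖η‖ ≤ 0 := by nlinarith [norm_nonneg η]
    simpa using le_antisymm this (norm_nonneg η)
  have hle : LinearMap.range (LinearMap.adjoint Ξ) ≤ (LinearMap.ker Ξ)ᗮ := by
    rintro _ ⟨η, rfl⟩
    intro v hv
    rw [LinearMap.mem_ker] at hv
    rw [real_inner_comm, LinearMap.adjoint_inner_left, hv, inner_zero_right]
  have hd1 : Module.finrank ℝ (LinearMap.range (LinearMap.adjoint Ξ)) = Module.finrank ℝ Q :=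
    LinearMap.finrank_range_of_inj hinj
  have hd2 : Module.finrank ℝ (LinearMap.ker Ξ) + Module.finrank ℝ Q = Module.finrank ℝ X := by
    have := LinearMap.finrank_range_add_finrank_ker Ξ
    rw [hsurj] at this
    simpa [add_comm] using this
  have hd3 : Module.finrank ℝ (LinearMap.ker Ξ) + Module.finrank ℝ ((LinearMap.ker Ξ)ᗮ)
      = Module.finrank ℝ X := Submodule.finrank_add_finrank_orthogonal _
  exact Submodule.eq_of_le_of_finrank_le hle (by omega)

set_option maxHeartbeats 4000000 in
/-- Geometric convergence of the iterated penalty method for the mixed problem. -/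
theorem stmt8 {X Q : Type*}
    [NormedAddCommGroup X] [InnerProductSpace ℝ X] [FiniteDimensional ℝ X]
    [NormedAddCommGroup Q] [InnerProductSpace ℝ Q] [FiniteDimensional ℝ Q]
    (Ξ : X →ₗ[ℝ] Q) (hsurj : LinearMap.range Ξ = ⊤)
    (A : X →ₗ[ℝ] X →ₗ[ℝ] ℝ) (M α β : ℝ) (hM : 0 < M) (hα : 0 < α) (hβ : 0 < β)
    (hbound : ∀ x y : X, |A x y| ≤ M * ‖x‖ * ‖y‖)
    (hαinfsup : ∀ u ∈ LinearMap.ker Ξ, α * ‖u‖ ≤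
      ⨆ v : {v : X // v ∈ LinearMap.ker Ξ ∧ v ≠ 0}, A u v.1 / ‖v.1‖)
    (hβinfsup : ∀ η : Q, β * ‖η‖ ≤ ⨆ x : {x : X // x ≠ 0}, ⟪Ξ x.1, η⟫ / ‖x.1‖)
    (lam₀ : ℝ) (hlam₀ : lam₀ = 5 * M / (4 * β ^ 2) * (1 + 2 * M / α) ^ 2)
    (F : X →ₗ[ℝ] ℝ) (xs : X) (qs : Q)
    (hmixed : ∀ y : X, A xs y + ⟪Ξ y, qs⟫ = F y) (hconstr : Ξ xs = 0)
    (lam : ℝ) (hlam : lam > 17 / 8 * lam₀)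
    (x u : ℕ → X)
    (hiter : ∀ n : ℕ, ∀ y : X,
      A (x n) y + lam * ⟪Ξ (x n), Ξ y⟫ = F y - ⟪Ξ (u n), Ξ y⟫)
    (hupdate : ∀ n : ℕ, u (n + 1) = u n + lam • x n) :
    (8 / 9 * (lam₀ / (lam - lam₀)) < 1) ∧
    ∃ C > (0 : ℝ), ∀ n : ℕ,
      ‖x n - xs‖ ≤ C * (8 / 9 * (lam₀ / (lam - lam₀))) ^ n * ‖x 0 - xs‖ := by
  have ha : (0 : ℝ) < M / α := div_pos hM hα
  set a : ℝ := M / α with ha_def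
  have hlam₀' : lam₀ = M * (1 + 2 * a) ^ 2 / β ^ 2 * (5 / 4) := by
    rw [hlam₀, ha_def]; field_simp
  have hlam₀pos : 0 < lam₀ := by
    rw [hlam₀']
    exact mul_pos (div_pos (mul_pos hM (pow_pos (by linarith) 2)) (pow_pos hβ 2)) (by norm_num)
  have hlampos : 0 < lam := by nlinarith
  have hlamsub : 0 < lam - lam₀ := by nlinarith
  set r : ℝ := 8 / 9 * (lam₀ / (lam - lam₀)) with hr_def
  have hrpos : 0 < r := mul_pos (by norm_num) (div_pos hlam₀pos hlamsub)
  have hrlt : r < 1 := by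
    rw [hr_def, mul_comm, div_mul_eq_mul_div, div_lt_one hlamsub]; nlinarith
  refine ⟨hrlt, ?_⟩
  set c₁ : ℝ := (1 + a) / β with hc₁_def
  have hc₁pos : 0 < c₁ := div_pos (by linarith) hβ
  have hMc : M * c₁ ^ 2 ≤ 4 / 5 * lam₀ := by
    rw [hc₁_def, hlam₀', div_pow]
    have h45 : 4 / 5 * (M * (1 + 2 * a) ^ 2 / β ^ 2 * (5 / 4)) = M * (1 + 2 * a) ^ 2 / β ^ 2 := by
      ring
    rw [h45, ← mul_div_assoc, div_le_div_iff₀ (pow_pos hβ 2) (pow_pos hβ 2)]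
    nlinarith [mul_nonneg (mul_nonneg hM.le (sq_nonneg β)) ha.le,
      mul_nonneg (mul_nonneg hM.le (sq_nonneg β)) (sq_nonneg a)]
  set D : ℝ := lam - M * c₁ ^ 2 with hD_def
  have hDge : lam - 4 / 5 * lam₀ ≤ D := by rw [hD_def]; linarith
  have hDpos : 0 < D := by nlinarith
  have h45pos : 0 < lam - 4 / 5 * lam₀ := by nlinarith
  -- the ratio bound : M c₁ / (D β) ≤ r
  have hrat : M * c₁ / (D * β) ≤ r := by
    have s1 : M * c₁ ≤ 4 / 5 * lam₀ * β := by
      rw [hc₁_def, hlam₀']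
      have h45 : 4 / 5 * (M * (1 + 2 * a) ^ 2 / β ^ 2 * (5 / 4)) * β
          = M * (1 + 2 * a) ^ 2 / β := by field_simp
      rw [h45, ← mul_div_assoc, div_le_div_iff₀ hβ hβ]
      nlinarith [mul_nonneg (mul_nonneg hM.le hβ.le) ha.le,
        mul_nonneg (mul_nonneg hM.le hβ.le) (sq_nonneg a)]
    have s2 : M * c₁ / (D * β) ≤ 4 / 5 * lam₀ / (lam - 4 / 5 * lam₀) := by
      rw [div_le_div_iff₀ (mul_pos hDpos hβ) h45pos]
      have t1 : M * c₁ * (lam - 4 / 5 * lam₀) ≤ 4 / 5 * lam₀ * β * (lam - 4 / 5 * lam₀) :=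
        mul_le_mul_of_nonneg_right s1 h45pos.le
      have t2 : 4 / 5 * lam₀ * β * (lam - 4 / 5 * lam₀) ≤ 4 / 5 * lam₀ * β * D :=
        mul_le_mul_of_nonneg_left hDge (by positivity)
      calc M * c₁ * (lam - 4 / 5 * lam₀) ≤ 4 / 5 * lam₀ * β * D := le_trans t1 t2
        _ = 4 / 5 * lam₀ * (D * β) := by ring
    have s3 : 4 / 5 * lam₀ / (lam - 4 / 5 * lam₀) ≤ r := by
      have hrr : r = 8 / 9 * lam₀ / (lam - lam₀) := by rw [hr_def]; ring
      rw [hrr, div_le_div_iff₀ h45pos hlamsub]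
      nlinarith [mul_pos hlam₀pos hlampos, mul_pos hlam₀pos hlam₀pos]
    exact le_trans s2 s3
  -- error sequences
  set e : ℕ → X := fun n => x n - xs with he_def
  set q : ℕ → Q := fun n => qs - Ξ (u n) with hq_def
  have hΞe : ∀ n, Ξ (e n) = Ξ (x n) := by
    intro n; show Ξ (x n - xs) = Ξ (x n); rw [map_sub, hconstr, sub_zero]
  -- the fundamental error equation
  have key1 : ∀ n y, A (e n) y + lam * ⟪Ξ (e n), Ξ y⟫ = ⟪Ξ y, q n⟫ := by
    intro n y
    have h1 := hiter n y
    have h2 := hmixed y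
    have e1 : A (e n) y = A (x n) y - A xs y := by
      show A (x n - xs) y = _; rw [map_sub, LinearMap.sub_apply]
    have e3 : ⟪Ξ y, q n⟫ = ⟪Ξ y, qs⟫ - ⟪Ξ (u n), Ξ y⟫ := by
      show ⟪Ξ y, qs - Ξ (u n)⟫ = _
      rw [inner_sub_right, real_inner_comm (Ξ y) (Ξ (u n))]
    rw [e1, hΞe n, e3]
    linarith
  -- A (e n) vanishes on the kernel
  have key2 : ∀ n, ∀ v ∈ LinearMap.ker Ξ, A (e n) v = 0 := by
    intro n v hv
    have h := key1 n v
    rw [LinearMap.mem_ker.mp hv] at h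
    simp only [inner_zero_right, inner_zero_left, mul_zero, add_zero] at h
    exact h
  -- next residual
  have key3 : ∀ n y, ⟪Ξ y, q (n + 1)⟫ = A (e n) y := by
    intro n y
    have h1 := key1 n y
    have e4 : q (n + 1) = q n - lam • Ξ (e n) := by
      show qs - Ξ (u (n + 1)) = (qs - Ξ (u n)) - lam • Ξ (e n)
      rw [hupdate n, map_add, map_smul, hΞe n]; abel
    rw [e4, inner_sub_right, real_inner_smul_right]
    have hcomm : ⟪Ξ y, Ξ (e n)⟫ = ⟪Ξ (e n), Ξ y⟫ := real_inner_comm _ _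
    rw [hcomm]
    linarith
  -- operator norm of Ξ
  obtain ⟨N, hNnn, hN⟩ : ∃ N : ℝ, 0 ≤ N ∧ ∀ y : X, ‖Ξ y‖ ≤ N * ‖y‖ := by
    refine ⟨‖LinearMap.toContinuousLinearMap Ξ‖, norm_nonneg _, fun y => ?_⟩
    simpa using (LinearMap.toContinuousLinearMap Ξ).le_opNorm y
  -- adjoint lower bound
  have hadj : ∀ η : Q, β * ‖η‖ ≤ ‖LinearMap.adjoint Ξ η‖ := by
    intro η
    refine le_trans (hβinfsup η) (Real.iSup_le ?_ (norm_nonneg _))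
    rintro ⟨y, hy⟩
    have hny : 0 < ‖y‖ := norm_pos_iff.mpr hy
    rw [div_le_iff₀ hny]
    calc ⟪Ξ y, η⟫ = ⟪η, Ξ y⟫ := real_inner_comm _ _
      _ = ⟪LinearMap.adjoint Ξ η, y⟫ := (LinearMap.adjoint_inner_left Ξ y η).symm
      _ ≤ ‖LinearMap.adjoint Ξ η‖ * ‖y‖ := real_inner_le_norm _ _
  have hrange := stmt8_range_adjoint Ξ hsurj β hβ hadj
  -- projection lower bound : β ‖P w‖ ≤ ‖Ξ w‖
  set K : Submodule ℝ X := (LinearMap.ker Ξ)ᗮ with hK_def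
  have hproj : ∀ w : X, β * ‖(Submodule.orthogonalProjectionOnto K w : X)‖ ≤ ‖Ξ w‖ := by
    intro w
    set p : X := (Submodule.orthogonalProjectionOnto K w : X) with hp_def
    have hpmem : p ∈ K := Submodule.coe_mem _
    obtain ⟨η, hη⟩ : p ∈ LinearMap.range (LinearMap.adjoint Ξ) := by
      rw [hrange]; exact hpmem
    have hker : w - p ∈ LinearMap.ker Ξ := by
      rw [← Submodule.orthogonal_orthogonal (LinearMap.ker Ξ)]
      exact Submodule.sub_starProjection_mem_orthogonal w
    have hΞp : Ξ p = Ξ w := by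
      have h0 : Ξ w - Ξ p = 0 := by rw [← map_sub]; exact LinearMap.mem_ker.mp hker
      exact (sub_eq_zero.mp h0).symm
    have hsq : ‖p‖ ^ 2 ≤ ‖η‖ * ‖Ξ w‖ := by
      calc ‖p‖ ^ 2 = ⟪p, p⟫ := (real_inner_self_eq_norm_sq p).symm
        _ = ⟪LinearMap.adjoint Ξ η, p⟫ := by rw [hη]
        _ = ⟪η, Ξ p⟫ := LinearMap.adjoint_inner_left Ξ p η
        _ = ⟪η, Ξ w⟫ := by rw [hΞp]
        _ ≤ ‖η‖ * ‖Ξ w‖ := real_inner_le_norm _ _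
    have hηb : β * ‖η‖ ≤ ‖p‖ := by have := hadj η; rwa [hη] at this
    rcases eq_or_lt_of_le (norm_nonneg p) with h0 | h0
    · rw [← h0, mul_zero]; exact norm_nonneg _
    · nlinarith [mul_le_mul_of_nonneg_right hηb (norm_nonneg (Ξ w)),
        mul_le_mul_of_nonneg_left hsq hβ.le]
  -- kernel-part estimate: ‖e n‖ ≤ (1 + a) * ‖P (e n)‖
  have hkpart : ∀ n, ‖e n‖ ≤ (1 + a) * ‖(Submodule.orthogonalProjectionOnto K (e n) : X)‖ := by
    intro n
    set p : X := (Submodule.orthogonalProjectionOnto K (e n) : X) with hp_def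
    set k : X := e n - p with hk_def
    have hker : k ∈ LinearMap.ker Ξ := by
      rw [hk_def, ← Submodule.orthogonal_orthogonal (LinearMap.ker Ξ)]
      exact Submodule.sub_starProjection_mem_orthogonal (e n)
    have hαk : α * ‖k‖ ≤ M * ‖p‖ := by
      refine le_trans (hαinfsup k hker)
        (Real.iSup_le ?_ (mul_nonneg hM.le (norm_nonneg _)))
      rintro ⟨v, hv, hv0⟩
      have hnv : 0 < ‖v‖ := norm_pos_iff.mpr hv0
      rw [div_le_iff₀ hnv]
      have hAk : A k v = -(A p v) := by
        have h0 := key2 n v hv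
        have hsplit : A k v = A (e n) v - A p v := by
          rw [hk_def, map_sub, LinearMap.sub_apply]
        rw [hsplit, h0]; ring
      rw [hAk]
      calc -(A p v) ≤ |A p v| := neg_le_abs _
        _ ≤ M * ‖p‖ * ‖v‖ := hbound p v
    have hkb : ‖k‖ ≤ a * ‖p‖ := by
      rw [ha_def, div_mul_eq_mul_div, le_div_iff₀ hα]
      nlinarith
    calc ‖e n‖ = ‖k + p‖ := by rw [hk_def]; congr 1; abel
      _ ≤ ‖k‖ + ‖p‖ := norm_add_le _ _
      _ ≤ (1 + a) * ‖p‖ := by nlinarith [norm_nonneg p]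
  -- combined: ‖e n‖ ≤ c₁ * ‖Ξ (e n)‖
  have hec : ∀ n, ‖e n‖ ≤ c₁ * ‖Ξ (e n)‖ := by
    intro n
    have h1 := hkpart n
    have h2 := hproj (e n)
    rw [hc₁_def, div_mul_eq_mul_div, le_div_iff₀ hβ]
    nlinarith [mul_le_mul_of_nonneg_right h1 hβ.le,
      mul_le_mul_of_nonneg_left h2 (by linarith : (0:ℝ) ≤ 1 + a)]
  -- penalty estimate
  have hpen : ∀ n, lam * ‖Ξ (e n)‖ ^ 2 ≤ M * ‖e n‖ ^ 2 + ‖Ξ (e n)‖ * ‖q n‖ := by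
    intro n
    have h1 := key1 n (e n)
    rw [real_inner_self_eq_norm_sq] at h1
    have h2 : -(A (e n) (e n)) ≤ M * ‖e n‖ ^ 2 := by
      have := hbound (e n) (e n)
      have := neg_le_abs (A (e n) (e n))
      nlinarith
    have h3 : ⟪Ξ (e n), q n⟫ ≤ ‖Ξ (e n)‖ * ‖q n‖ := real_inner_le_norm _ _
    linarith
  -- residual controls error
  have herr : ∀ n, ‖e n‖ ≤ c₁ / D * ‖q n‖ := by
    intro n
    have hDt : D * ‖Ξ (e n)‖ ≤ ‖q n‖ := by
      have h1 := hpen n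
      have h2 := hec n
      have h3 : M * ‖e n‖ ^ 2 ≤ M * c₁ ^ 2 * ‖Ξ (e n)‖ ^ 2 := by
        nlinarith [mul_le_mul h2 h2 (norm_nonneg (e n))
          (mul_nonneg hc₁pos.le (norm_nonneg (Ξ (e n)))), hM.le, norm_nonneg (e n)]
      have h4 : D * ‖Ξ (e n)‖ ^ 2 ≤ ‖Ξ (e n)‖ * ‖q n‖ := by
        rw [hD_def]; nlinarith
      rcases eq_or_lt_of_le (norm_nonneg (Ξ (e n))) with h0 | h0
      · rw [← h0, mul_zero]; exact norm_nonneg _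
      · nlinarith
    have hstep : c₁ * ‖Ξ (e n)‖ = c₁ / D * (D * ‖Ξ (e n)‖) := by
      field_simp
    calc ‖e n‖ ≤ c₁ * ‖Ξ (e n)‖ := hec n
      _ = c₁ / D * (D * ‖Ξ (e n)‖) := hstep
      _ ≤ c₁ / D * ‖q n‖ := mul_le_mul_of_nonneg_left hDt (div_pos hc₁pos hDpos).le
  -- next residual bound
  have hnext : ∀ n, β * ‖q (n + 1)‖ ≤ M * ‖e n‖ := by
    intro n
    refine le_trans (hβinfsup (q (n + 1)))
      (Real.iSup_le ?_ (mul_nonneg hM.le (norm_nonneg _)))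
    rintro ⟨y, hy⟩
    have hny : 0 < ‖y‖ := norm_pos_iff.mpr hy
    rw [div_le_iff₀ hny, key3 n y]
    calc A (e n) y ≤ |A (e n) y| := le_abs_self _
      _ ≤ M * ‖e n‖ * ‖y‖ := hbound (e n) y
  -- contraction
  have hcontr : ∀ n, ‖q (n + 1)‖ ≤ r * ‖q n‖ := by
    intro n
    have hqb : ‖q (n + 1)‖ ≤ M * c₁ / (D * β) * ‖q n‖ := by
      rw [div_mul_eq_mul_div, le_div_iff₀ (mul_pos hDpos hβ)]
      have h1 := hnext n
      have h2 := herr n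
      have h3 : M * ‖e n‖ ≤ M * (c₁ / D * ‖q n‖) := mul_le_mul_of_nonneg_left h2 hM.le
      have h4 : β * ‖q (n + 1)‖ ≤ M * (c₁ / D * ‖q n‖) := le_trans h1 h3
      have h5 := mul_le_mul_of_nonneg_left h4 hDpos.le
      calc ‖q (n + 1)‖ * (D * β) = D * (β * ‖q (n + 1)‖) := by ring
        _ ≤ D * (M * (c₁ / D * ‖q n‖)) := h5
        _ = M * c₁ * ‖q n‖ := by field_simp
    calc ‖q (n + 1)‖ ≤ M * c₁ / (D * β) * ‖q n‖ := hqb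
      _ ≤ r * ‖q n‖ := mul_le_mul_of_nonneg_right hrat (norm_nonneg _)
  -- geometric decay of residuals
  have hgeo : ∀ n, ‖q n‖ ≤ r ^ n * ‖q 0‖ := by
    intro n
    induction n with
    | zero => simp
    | succ m ih =>
      calc ‖q (m + 1)‖ ≤ r * ‖q m‖ := hcontr m
        _ ≤ r * (r ^ m * ‖q 0‖) := mul_le_mul_of_nonneg_left ih hrpos.le
        _ = r ^ (m + 1) * ‖q 0‖ := by ring
  -- initial residual bound
  have hinit : β * ‖q 0‖ ≤ (M + lam * N ^ 2) * ‖e 0‖ := by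
    have hMN : (0:ℝ) ≤ M + lam * N ^ 2 := by nlinarith [sq_nonneg N]
    refine le_trans (hβinfsup (q 0))
      (Real.iSup_le ?_ (mul_nonneg hMN (norm_nonneg _)))
    rintro ⟨y, hy⟩
    have hny : 0 < ‖y‖ := norm_pos_iff.mpr hy
    rw [div_le_iff₀ hny]
    have h1 := key1 0 y
    have h3 : A (e 0) y ≤ M * ‖e 0‖ * ‖y‖ :=
      le_trans (le_abs_self _) (hbound (e 0) y)
    have h6 : ⟪Ξ (e 0), Ξ y⟫ ≤ N * ‖e 0‖ * (N * ‖y‖) := by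
      calc ⟪Ξ (e 0), Ξ y⟫ ≤ ‖Ξ (e 0)‖ * ‖Ξ y‖ := real_inner_le_norm _ _
        _ ≤ N * ‖e 0‖ * (N * ‖y‖) :=
            mul_le_mul (hN (e 0)) (hN y) (norm_nonneg _) (mul_nonneg hNnn (norm_nonneg _))
    have h7 := mul_le_mul_of_nonneg_left h6 hlampos.le
    nlinarith [h1, h3, h7]
  -- conclusion
  have hC0 : (0:ℝ) ≤ c₁ / D * ((M + lam * N ^ 2) / β) := by
    apply mul_nonneg (div_pos hc₁pos hDpos).le
    apply div_nonneg _ hβ.le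
    nlinarith [sq_nonneg N]
  refine ⟨c₁ / D * ((M + lam * N ^ 2) / β) + 1, by linarith, ?_⟩
  intro n
  have hrn : (0:ℝ) ≤ r ^ n := pow_nonneg hrpos.le n
  have h1 : ‖e n‖ ≤ c₁ / D * (r ^ n * ‖q 0‖) := by
    have h2 := mul_le_mul_of_nonneg_left (hgeo n) (div_pos hc₁pos hDpos).le
    exact le_trans (herr n) h2
  have h2 : ‖q 0‖ ≤ (M + lam * N ^ 2) / β * ‖e 0‖ := by
    rw [div_mul_eq_mul_div, le_div_iff₀ hβ]
    nlinarith [hinit]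
  show ‖e n‖ ≤ _ * _ ^ n * ‖e 0‖
  calc ‖e n‖ ≤ c₁ / D * (r ^ n * ‖q 0‖) := h1
    _ ≤ c₁ / D * (r ^ n * ((M + lam * N ^ 2) / β * ‖e 0‖)) := by
        apply mul_le_mul_of_nonneg_left _ (div_pos hc₁pos hDpos).le
        exact mul_le_mul_of_nonneg_left h2 hrn
    _ = c₁ / D * ((M + lam * N ^ 2) / β) * r ^ n * ‖e 0‖ := by ring
    _ ≤ (c₁ / D * ((M + lam * N ^ 2) / β) + 1) * r ^ n * ‖e 0‖ := by
        apply mul_le_mul_of_nonneg_right _ (norm_nonneg _)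
        apply mul_le_mul_of_nonneg_right _ hrn
        linarith
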